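/- Let a_1, ..., a_m and p_1, ..., p_m be reals with 0 ≤ a_i ≤ p_i ≤ 1 for all i, a_1 = p_1, and ∑_{j=1}^i a_j ≤ 1 for all i ≤ m. Setting h_i = 1 - ∑_{j=1}^i a_j, if m ≤ k and m ≥ 2 then (2k/(k+1)) ∑_{i=1}^m p_i h_{i-1} - ∑_{i=1}^m a_i ≥ 0. -/
import Mathlib


open Finset

lemma aux_sq_sum {m : ℕ} (a : Fin m → ℝ) :
    (∑ i, a i) ^ 2 = ∑ i, (a i) ^ 2
      + 2 * ∑ i, a i * ∑ j ∈ Finset.univ.filter (fun j => j < i), a j := by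
  have h1 : (∑ i, a i) ^ 2 = ∑ i, ∑ j, a i * a j := by
    rw [sq, Finset.sum_mul_sum]
  have hsplit : ∀ i : Fin m, (∑ j, a i * a j)
      = a i * ∑ j ∈ Finset.univ.filter (fun j => j < i), a j
        + a i * a i
        + ∑ j ∈ Finset.univ.filter (fun j => i < j), a i * a j := by
    intro i
    have h2 : (Finset.univ.filter (fun j => ¬ j < i) : Finset (Fin m))
        = insert i (Finset.univ.filter (fun j => i < j)) := by
      ext j
      simp only [Finset.mem_filter, Finset.mem_univ, true_and, Finset.mem_insert, not_lt]
      constructor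
      · intro h
        rcases eq_or_lt_of_le h with h' | h'
        · exact Or.inl h'.symm
        · exact Or.inr h'
      · rintro (rfl | h)
        · exact le_refl _
        · exact le_of_lt h
    calc (∑ j, a i * a j)
        = (∑ j ∈ Finset.univ.filter (fun j => j < i), a i * a j)
          + ∑ j ∈ Finset.univ.filter (fun j => ¬ j < i), a i * a j :=
          (Finset.sum_filter_add_sum_filter_not _ _ _).symm
      _ = a i * ∑ j ∈ Finset.univ.filter (fun j => j < i), a j
          + a i * a i
          + ∑ j ∈ Finset.univ.filter (fun j => i < j), a i * a j := by
          rw [h2, Finset.sum_insert (by simp), Finset.mul_sum]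
          ring
  have hswap : (∑ i, ∑ j ∈ Finset.univ.filter (fun j => i < j), a i * a j)
      = ∑ i, a i * ∑ j ∈ Finset.univ.filter (fun j => j < i), a j := by
    calc (∑ i, ∑ j ∈ Finset.univ.filter (fun j => i < j), a i * a j)
        = ∑ i, ∑ j, if i < j then a i * a j else 0 := by
          simp [Finset.sum_filter]
      _ = ∑ j, ∑ i, if i < j then a i * a j else 0 := Finset.sum_comm
      _ = ∑ j, ∑ i ∈ Finset.univ.filter (fun i => i < j), a i * a j := by
          simp [Finset.sum_filter]
      _ = ∑ j, a j * ∑ i ∈ Finset.univ.filter (fun i => i < j), a i := by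
          refine Finset.sum_congr rfl fun j _ => ?_
          rw [Finset.mul_sum]
          exact Finset.sum_congr rfl fun i _ => mul_comm _ _
  calc (∑ i, a i) ^ 2 = ∑ i, ∑ j, a i * a j := h1
    _ = ∑ i, (a i * ∑ j ∈ Finset.univ.filter (fun j => j < i), a j
          + a i * a i
          + ∑ j ∈ Finset.univ.filter (fun j => i < j), a i * a j) :=
        Finset.sum_congr rfl fun i _ => hsplit i
    _ = (∑ i, a i * ∑ j ∈ Finset.univ.filter (fun j => j < i), a j)
        + (∑ i, a i * a i)
        + ∑ i, ∑ j ∈ Finset.univ.filter (fun j => i < j), a i * a j := by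
        rw [Finset.sum_add_distrib, Finset.sum_add_distrib]
    _ = ∑ i, (a i) ^ 2
        + 2 * ∑ i, a i * ∑ j ∈ Finset.univ.filter (fun j => j < i), a j := by
        rw [hswap]
        simp [sq]
        ring

/-- triggering-model key inequality. With 0 ≤ a_i ≤ p_i ≤ 1,
    a_1 = p_1, partial sums of a bounded by 1, h_{i-1} = 1 - ∑_{j<i} a_j,
    and 2 ≤ m ≤ k, we have (2k/(k+1)) ∑ p_i h_{i-1} - ∑ a_i ≥ 0. -/
theorem stmt_6 (m k : ℕ) (hm : 2 ≤ m) (hmk : m ≤ k)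
    (a p : Fin m → ℝ)
    (ha0 : ∀ i, 0 ≤ a i) (hap : ∀ i, a i ≤ p i) (hp1 : ∀ i, p i ≤ 1)
    (hfirst : a ⟨0, by omega⟩ = p ⟨0, by omega⟩)
    (hpartial : ∀ i : Fin m, ∑ j ∈ Finset.univ.filter (fun j => j ≤ i), a j ≤ 1) :
    0 ≤ (2 * (k : ℝ) / ((k : ℝ) + 1)) *
        (∑ i, p i * (1 - ∑ j ∈ Finset.univ.filter (fun j => j < i), a j))
      - ∑ i, a i := by
  set S : Fin m → ℝ := fun i => ∑ j ∈ Finset.univ.filter (fun j => j < i), a j with hSdef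
  set A : ℝ := ∑ i, a i with hAdef
  set Q : ℝ := ∑ i, (a i) ^ 2 with hQdef
  have hS0 : ∀ i, 0 ≤ S i := fun i =>
    Finset.sum_nonneg fun j _ => ha0 j
  have hS1 : ∀ i, S i ≤ 1 := by
    intro i
    refine le_trans ?_ (hpartial i)
    refine Finset.sum_le_sum_of_subset_of_nonneg ?_ (fun j _ _ => ha0 j)
    intro j hj
    simp only [Finset.mem_filter, Finset.mem_univ, true_and] at hj ⊢
    exact le_of_lt hj
  have hA1 : A ≤ 1 := by
    have := hpartial ⟨m - 1, by omega⟩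
    have heq : (Finset.univ.filter (fun j => j ≤ (⟨m - 1, by omega⟩ : Fin m)))
        = Finset.univ := by
      ext j
      simp only [Finset.mem_filter, Finset.mem_univ, true_and, iff_true]
      have hj := j.isLt
      simp only [Fin.le_def]
      omega
    rw [heq] at this
    exact this
  have hA0 : 0 ≤ A := Finset.sum_nonneg fun i _ => ha0 i
  have hCS : A ^ 2 ≤ (m : ℝ) * Q := by
    have := sq_sum_le_card_mul_sum_sq (s := (Finset.univ : Finset (Fin m))) (f := a)
    simpa using this
  have hkey : (∑ i, a i * (1 - S i)) ≤ ∑ i, p i * (1 - S i) := by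
    refine Finset.sum_le_sum fun i _ => ?_
    have h1 : 0 ≤ 1 - S i := by linarith [hS1 i]
    exact mul_le_mul_of_nonneg_right (hap i) h1
  have hid : (∑ i, a i * (1 - S i)) = A - (A ^ 2 - Q) / 2 := by
    have h : A ^ 2 = Q + 2 * ∑ i, a i * S i := aux_sq_sum a
    have h2 : (∑ i, a i * (1 - S i)) = A - ∑ i, a i * S i := by
      rw [hAdef, ← Finset.sum_sub_distrib]
      exact Finset.sum_congr rfl fun i _ => by ring
    rw [h2]
    linarith
  have hk2 : (2 : ℝ) ≤ (k : ℝ) := by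
    have : (2 : ℕ) ≤ k := le_trans hm hmk
    exact_mod_cast this
  have hkpos : (0 : ℝ) < (k : ℝ) + 1 := by linarith
  have hmk' : (m : ℝ) ≤ (k : ℝ) := by exact_mod_cast hmk
  have hm2 : (2 : ℝ) ≤ (m : ℝ) := by exact_mod_cast hm
  rw [sub_nonneg, div_mul_eq_mul_div, le_div_iff₀ hkpos]
  have hP : A - (A ^ 2 - Q) / 2 ≤ ∑ i, p i * (1 - S i) := hid ▸ hkey
  have hmpos : (0 : ℝ) < (m : ℝ) := by linarith
  have hQA : (k : ℝ) * Q ≥ (k : ℝ) * (A ^ 2 / m) := by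
    have : A ^ 2 / m ≤ Q := by
      rw [div_le_iff₀ hmpos]
      linarith [hCS]
    nlinarith
  nlinarith [mul_le_mul_of_nonneg_left hP (by linarith : (0:ℝ) ≤ 2 * (k:ℝ)),
    mul_nonneg (mul_nonneg hA0 (sub_nonneg.2 hA1)) (by linarith : (0:ℝ) ≤ (k:ℝ) - 1),
    mul_pos hmpos hkpos, sq_nonneg A,
    mul_nonneg (sq_nonneg A) (by linarith : (0:ℝ) ≤ (k:ℝ) - (m:ℝ)),
    mul_nonneg hA0 (by linarith : (0:ℝ) ≤ (k:ℝ) - (m:ℝ))]
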